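/- Let 𝒴 ⊂ ℝ be a finite set, let 𝒜, 𝒢₁, 𝒢₂, ℬ₂ be finite types, let p be a strictly positive probability mass function on 𝒴 × 𝒜 × 𝒢₁ × 𝒢₂ × ℬ₂, and fix a ∈ 𝒜. If G₂ ⊥ (A, G₁) | B₂ under p, then for every g₁: ∑_{(y,a′,g₂,b₂)} p(y,a′,g₂,b₂ | g₁) · ( ψ_a^{G₁,B₂}(y,a′,g₁,b₂) − ψ_a^{G₁,(G₂,B₂)}(y,a′,g₁,g₂,b₂) ) = 0; that is, the difference of the two influence functions has vanishing conditional expectation given G₁. -/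

import Mathlib

open Finset

noncomputable section

variable {Y : Finset ℝ} {A G₁ G₂ B₂ : Type}
variable [Fintype A] [Fintype G₁] [Fintype G₂] [Fintype B₂] [DecidableEq A]

/-- Marginal `p(g₁)`. -/
def pG1 (p : Y × A × G₁ × G₂ × B₂ → ℝ) (g₁ : G₁) : ℝ :=
  ∑ y : Y, ∑ a : A, ∑ g₂ : G₂, ∑ b₂ : B₂, p (y, a, g₁, g₂, b₂)

/-- Marginal `p(g₂)`. -/
def pG2 (p : Y × A × G₁ × G₂ × B₂ → ℝ) (g₂ : G₂) : ℝ :=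
  ∑ y : Y, ∑ a : A, ∑ g₁ : G₁, ∑ b₂ : B₂, p (y, a, g₁, g₂, b₂)

/-- Marginal `p(b₂)`. -/
def pB2 (p : Y × A × G₁ × G₂ × B₂ → ℝ) (b₂ : B₂) : ℝ :=
  ∑ y : Y, ∑ a : A, ∑ g₁ : G₁, ∑ g₂ : G₂, p (y, a, g₁, g₂, b₂)

/-- Marginal `p(g₂, b₂)`. -/
def pG2B2 (p : Y × A × G₁ × G₂ × B₂ → ℝ) (g₂ : G₂) (b₂ : B₂) : ℝ :=
  ∑ y : Y, ∑ a : A, ∑ g₁ : G₁, p (y, a, g₁, g₂, b₂)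

/-- Marginal `p(a, g₁, b₂)`. -/
def pAG1B2 (p : Y × A × G₁ × G₂ × B₂ → ℝ) (a : A) (g₁ : G₁) (b₂ : B₂) : ℝ :=
  ∑ y : Y, ∑ g₂ : G₂, p (y, a, g₁, g₂, b₂)

/-- Marginal `p(a, g₁, g₂, b₂)`. -/
def pAG1G2B2 (p : Y × A × G₁ × G₂ × B₂ → ℝ) (a : A) (g₁ : G₁) (g₂ : G₂) (b₂ : B₂) : ℝ :=
  ∑ y : Y, p (y, a, g₁, g₂, b₂)

/-- Marginal `p(a, g₁, g₂)`. -/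
def pAG1G2 (p : Y × A × G₁ × G₂ × B₂ → ℝ) (a : A) (g₁ : G₁) (g₂ : G₂) : ℝ :=
  ∑ y : Y, ∑ b₂ : B₂, p (y, a, g₁, g₂, b₂)

/-- Outcome regression `m₁(g₁,b₂) = ∑_y y·p(y | a, g₁, b₂)` for the
adjustment set `(G₁, B₂)`. -/
def m1 (p : Y × A × G₁ × G₂ × B₂ → ℝ) (a : A) (g₁ : G₁) (b₂ : B₂) : ℝ :=
  ∑ y : Y, (y : ℝ) * ((∑ g₂ : G₂, p (y, a, g₁, g₂, b₂)) / pAG1B2 p a g₁ b₂)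

/-- Outcome regression `m₂(g₁,g₂,b₂) = ∑_y y·p(y | a, g₁, g₂, b₂)` for the
adjustment set `(G₁, (G₂, B₂))`. -/
def m2 (p : Y × A × G₁ × G₂ × B₂ → ℝ) (a : A) (g₁ : G₁) (g₂ : G₂) (b₂ : B₂) : ℝ :=
  ∑ y : Y, (y : ℝ) * (p (y, a, g₁, g₂, b₂) / pAG1G2B2 p a g₁ g₂ b₂)

/-- Outcome regression `m₃(g₁,g₂) = ∑_y y·p(y | a, g₁, g₂)` for the
adjustment set `(G₁, G₂)`. -/
def m3 (p : Y × A × G₁ × G₂ × B₂ → ℝ) (a : A) (g₁ : G₁) (g₂ : G₂) : ℝ :=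
  ∑ y : Y, (y : ℝ) * ((∑ b₂ : B₂, p (y, a, g₁, g₂, b₂)) / pAG1G2 p a g₁ g₂)

/-- Target parameter for the adjustment set `(G₁, B₂)`. -/
def T1 (p : Y × A × G₁ × G₂ × B₂ → ℝ) (a : A) : ℝ :=
  ∑ g₁ : G₁, pG1 p g₁ * ∑ b₂ : B₂, pB2 p b₂ * m1 p a g₁ b₂

/-- Target parameter for the adjustment set `(G₁, (G₂, B₂))`. -/
def T2 (p : Y × A × G₁ × G₂ × B₂ → ℝ) (a : A) : ℝ :=
  ∑ g₁ : G₁, pG1 p g₁ * ∑ g₂ : G₂, ∑ b₂ : B₂, pG2B2 p g₂ b₂ * m2 p a g₁ g₂ b₂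

/-- Target parameter for the adjustment set `(G₁, G₂)`. -/
def T3 (p : Y × A × G₁ × G₂ × B₂ → ℝ) (a : A) : ℝ :=
  ∑ g₁ : G₁, pG1 p g₁ * ∑ g₂ : G₂, pG2 p g₂ * m3 p a g₁ g₂

/-- Influence function `ψ_a^{G₁,B₂}` for the adjustment set `(G₁, B₂)`. -/
def psi1 (p : Y × A × G₁ × G₂ × B₂ → ℝ) (a : A)
    (y : Y) (a' : A) (g₁ : G₁) (b₂ : B₂) : ℝ :=
  (if a' = a then (1 : ℝ) else 0) * (pG1 p g₁ * pB2 p b₂ / pAG1B2 p a g₁ b₂) *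
      ((y : ℝ) - m1 p a g₁ b₂)
    + (∑ b₂' : B₂, pB2 p b₂' * m1 p a g₁ b₂')
    + (∑ g₁' : G₁, pG1 p g₁' * m1 p a g₁' b₂)
    - 2 * T1 p a

/-- Influence function `ψ_a^{G₁,(G₂,B₂)}` for the adjustment set `(G₁, (G₂, B₂))`. -/
def psi2 (p : Y × A × G₁ × G₂ × B₂ → ℝ) (a : A)
    (y : Y) (a' : A) (g₁ : G₁) (g₂ : G₂) (b₂ : B₂) : ℝ :=
  (if a' = a then (1 : ℝ) else 0) *
      (pG1 p g₁ * pG2B2 p g₂ b₂ / pAG1G2B2 p a g₁ g₂ b₂) *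
      ((y : ℝ) - m2 p a g₁ g₂ b₂)
    + (∑ g₂' : G₂, ∑ b₂' : B₂, pG2B2 p g₂' b₂' * m2 p a g₁ g₂' b₂')
    + (∑ g₁' : G₁, pG1 p g₁' * m2 p a g₁' g₂ b₂)
    - 2 * T2 p a

/-- Influence function `ψ_a^{G₁,G₂}` for the adjustment set `(G₁, G₂)`. -/
def psi3 (p : Y × A × G₁ × G₂ × B₂ → ℝ) (a : A)
    (y : Y) (a' : A) (g₁ : G₁) (g₂ : G₂) : ℝ :=
  (if a' = a then (1 : ℝ) else 0) * (pG1 p g₁ * pG2 p g₂ / pAG1G2 p a g₁ g₂) *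
      ((y : ℝ) - m3 p a g₁ g₂)
    + (∑ g₂' : G₂, pG2 p g₂' * m3 p a g₁ g₂')
    + (∑ g₁' : G₁, pG1 p g₁' * m3 p a g₁' g₂)
    - 2 * T3 p a

/-- Conditional independence `G₂ ⊥ (A, G₁) | B₂` under `p`. -/
def CI_G2_AG1_B2 (p : Y × A × G₁ × G₂ × B₂ → ℝ) : Prop :=
  ∀ (g₂ : G₂) (a : A) (g₁ : G₁) (b₂ : B₂),
    (∑ y : Y, p (y, a, g₁, g₂, b₂)) / pB2 p b₂ =
      (pG2B2 p g₂ b₂ / pB2 p b₂) * (pAG1B2 p a g₁ b₂ / pB2 p b₂)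

/-- Conditional independence `Y ⊥ B₂ | (A, G₁, G₂)` under `p`. -/
def CI_Y_B2_AG1G2 (p : Y × A × G₁ × G₂ × B₂ → ℝ) : Prop :=
  ∀ (y : Y) (a : A) (g₁ : G₁) (g₂ : G₂) (b₂ : B₂),
    p (y, a, g₁, g₂, b₂) / pAG1G2 p a g₁ g₂ =
      ((∑ b₂' : B₂, p (y, a, g₁, g₂, b₂')) / pAG1G2 p a g₁ g₂) *
        (pAG1G2B2 p a g₁ g₂ b₂ / pAG1G2 p a g₁ g₂)

/-- Variance of a real function of the observation under `p`. -/
def VarP (p : Y × A × G₁ × G₂ × B₂ → ℝ) (f : Y × A × G₁ × G₂ × B₂ → ℝ) : ℝ :=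
  (∑ o : Y × A × G₁ × G₂ × B₂, p o * f o ^ 2) -
    (∑ o : Y × A × G₁ × G₂ × B₂, p o * f o) ^ 2

set_option linter.unusedSectionVars false

section Aux

variable (p : Y × A × G₁ × G₂ × B₂ → ℝ)

lemma center_zero (S : Y → ℝ) (w D m : ℝ) (hD : D = ∑ y : Y, S y) (hDne : D ≠ 0)
    (hm : m = ∑ y : Y, (y : ℝ) * (S y / D)) :
    ∑ y : Y, S y * (w * ((y : ℝ) - m)) = 0 := by
  have h1 : m * D = ∑ y : Y, (y : ℝ) * S y := by
    rw [hm, Finset.sum_mul]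
    exact Finset.sum_congr rfl fun y _ => by field_simp
  have expand : ∑ y : Y, S y * (w * ((y : ℝ) - m))
      = w * (∑ y : Y, (y : ℝ) * S y) - (w * m) * D := by
    rw [hD, Finset.mul_sum, Finset.mul_sum, ← Finset.sum_sub_distrib]
    exact Finset.sum_congr rfl fun y _ => by ring
  rw [expand, ← h1]; ring

lemma pB2_pos' [Nonempty Y] [Nonempty A] [Nonempty G₁] [Nonempty G₂]
    (hpos : ∀ o, 0 < p o) (b₂ : B₂) : 0 < pB2 p b₂ :=
  Finset.sum_pos (fun _ _ => Finset.sum_pos (fun _ _ => Finset.sum_pos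
    (fun _ _ => Finset.sum_pos (fun _ _ => hpos _) univ_nonempty) univ_nonempty)
    univ_nonempty) univ_nonempty

lemma pAG1B2_pos' [Nonempty Y] [Nonempty G₂]
    (hpos : ∀ o, 0 < p o) (a : A) (g₁ : G₁) (b₂ : B₂) : 0 < pAG1B2 p a g₁ b₂ :=
  Finset.sum_pos (fun _ _ => Finset.sum_pos (fun _ _ => hpos _) univ_nonempty)
    univ_nonempty

lemma pAG1G2B2_pos' [Nonempty Y]
    (hpos : ∀ o, 0 < p o) (a : A) (g₁ : G₁) (g₂ : G₂) (b₂ : B₂) :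
    0 < pAG1G2B2 p a g₁ g₂ b₂ :=
  Finset.sum_pos (fun _ _ => hpos _) univ_nonempty

lemma keyA [Nonempty Y] [Nonempty A] [Nonempty G₁] [Nonempty G₂]
    (hpos : ∀ o, 0 < p o) (hCI : CI_G2_AG1_B2 p)
    (a' : A) (g₁ : G₁) (g₂ : G₂) (b₂ : B₂) :
    pAG1G2B2 p a' g₁ g₂ b₂ * pB2 p b₂ = pG2B2 p g₂ b₂ * pAG1B2 p a' g₁ b₂ := by
  have hb := pB2_pos' p hpos b₂
  have h := hCI g₂ a' g₁ b₂
  have h0 : (∑ y : Y, p (y, a', g₁, g₂, b₂)) = pAG1G2B2 p a' g₁ g₂ b₂ := rfl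
  rw [h0] at h
  field_simp at h
  exact mul_right_cancel₀ (ne_of_gt hb) (by rw [h])

/-- Key identity (i): `∑_{g₂} p(g₂,b₂)·m2 = p(b₂)·m1`. -/
lemma key_i [Nonempty Y] [Nonempty A] [Nonempty G₁] [Nonempty G₂]
    (hpos : ∀ o, 0 < p o) (hCI : CI_G2_AG1_B2 p) (a : A) (g₁ : G₁) (b₂ : B₂) :
    ∑ g₂ : G₂, pG2B2 p g₂ b₂ * m2 p a g₁ g₂ b₂ = pB2 p b₂ * m1 p a g₁ b₂ := by
  have h1 : pAG1B2 p a g₁ b₂ ≠ 0 := ne_of_gt (pAG1B2_pos' p hpos a g₁ b₂)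
  unfold m1 m2
  simp only [Finset.mul_sum]
  rw [Finset.sum_comm]
  refine Finset.sum_congr rfl fun y _ => ?_
  rw [Finset.sum_div]
  simp only [Finset.mul_sum]
  refine Finset.sum_congr rfl fun g₂ _ => ?_
  have h2 : pAG1G2B2 p a g₁ g₂ b₂ ≠ 0 := ne_of_gt (pAG1G2B2_pos' p hpos a g₁ g₂ b₂)
  have h := keyA p hpos hCI a g₁ g₂ b₂
  field_simp
  linear_combination (-((y : ℝ) * p (y, a, g₁, g₂, b₂))) * h

lemma key_u [Nonempty Y] [Nonempty A] [Nonempty G₁] [Nonempty G₂]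
    (hpos : ∀ o, 0 < p o) (hCI : CI_G2_AG1_B2 p) (a : A) (g₁ : G₁) :
    (∑ b₂' : B₂, pB2 p b₂' * m1 p a g₁ b₂') =
      ∑ g₂' : G₂, ∑ b₂' : B₂, pG2B2 p g₂' b₂' * m2 p a g₁ g₂' b₂' := by
  rw [Finset.sum_comm]
  exact Finset.sum_congr rfl fun b₂ _ => (key_i p hpos hCI a g₁ b₂).symm

lemma key_T [Nonempty Y] [Nonempty A] [Nonempty G₁] [Nonempty G₂]
    (hpos : ∀ o, 0 < p o) (hCI : CI_G2_AG1_B2 p) (a : A) :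
    T1 p a = T2 p a := by
  unfold T1 T2
  exact Finset.sum_congr rfl fun g₁ _ => by rw [key_u p hpos hCI a g₁]

/-- Key identity (ii): summed version of `keyA` combined with `key_i`. -/
lemma key_ii [Nonempty Y] [Nonempty A] [Nonempty G₁] [Nonempty G₂]
    (hpos : ∀ o, 0 < p o) (hCI : CI_G2_AG1_B2 p)
    (a : A) (g₁ g₁' : G₁) (b₂ : B₂) :
    ∑ g₂ : G₂, (∑ y : Y, ∑ a' : A, p (y, a', g₁, g₂, b₂)) * m2 p a g₁' g₂ b₂ =
      (∑ g₂ : G₂, ∑ y : Y, ∑ a' : A, p (y, a', g₁, g₂, b₂)) * m1 p a g₁' b₂ := by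
  have hb := pB2_pos' p hpos b₂
  have e3 : (∑ g₂ : G₂, ∑ y : Y, ∑ a' : A, p (y, a', g₁, g₂, b₂))
      = ∑ y : Y, ∑ a' : A, ∑ g₂ : G₂, p (y, a', g₁, g₂, b₂) := by
    rw [Finset.sum_comm]
    exact Finset.sum_congr rfl fun y _ => Finset.sum_comm
  have hq : ∀ g₂ : G₂, (∑ y : Y, ∑ a' : A, p (y, a', g₁, g₂, b₂)) * pB2 p b₂
      = pG2B2 p g₂ b₂ * (∑ y : Y, ∑ a' : A, ∑ g₂' : G₂, p (y, a', g₁, g₂', b₂)) := by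
    intro g₂
    have h : (∑ a' : A, pAG1G2B2 p a' g₁ g₂ b₂) * pB2 p b₂
        = pG2B2 p g₂ b₂ * (∑ a' : A, pAG1B2 p a' g₁ b₂) := by
      rw [Finset.sum_mul, Finset.mul_sum]
      exact Finset.sum_congr rfl fun a' _ => keyA p hpos hCI a' g₁ g₂ b₂
    have e1 : (∑ a' : A, pAG1G2B2 p a' g₁ g₂ b₂)
        = ∑ y : Y, ∑ a' : A, p (y, a', g₁, g₂, b₂) := Finset.sum_comm
    have e2 : (∑ a' : A, pAG1B2 p a' g₁ b₂)
        = ∑ y : Y, ∑ a' : A, ∑ g₂' : G₂, p (y, a', g₁, g₂', b₂) := Finset.sum_comm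
    rw [e1, e2] at h
    exact h
  rw [e3]
  refine mul_right_cancel₀ (ne_of_gt hb) ?_
  rw [Finset.sum_mul]
  rw [Finset.sum_congr rfl fun g₂ _ => show
      ((∑ y : Y, ∑ a' : A, p (y, a', g₁, g₂, b₂)) * m2 p a g₁' g₂ b₂) * pB2 p b₂
      = (pG2B2 p g₂ b₂ * m2 p a g₁' g₂ b₂) *
          (∑ y : Y, ∑ a' : A, ∑ g₂' : G₂, p (y, a', g₁, g₂', b₂)) from by
    linear_combination (m2 p a g₁' g₂ b₂) * hq g₂]
  rw [← Finset.sum_mul, key_i p hpos hCI a g₁' b₂]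
  ring

lemma keyF1 [Nonempty Y] [Nonempty A] [Nonempty G₁] [Nonempty G₂]
    (hpos : ∀ o, 0 < p o) (a : A) (g₁ : G₁) :
    ∑ y : Y, ∑ a' : A, ∑ g₂ : G₂, ∑ b₂ : B₂,
      p (y, a', g₁, g₂, b₂) *
        ((if a' = a then (1 : ℝ) else 0) *
          (pG1 p g₁ * pB2 p b₂ / pAG1B2 p a g₁ b₂) * ((y : ℝ) - m1 p a g₁ b₂)) = 0 := by
  have pull : ∀ (c : Prop) [Decidable c] (F : G₂ → B₂ → ℝ),
      (∑ g₂ : G₂, ∑ b₂ : B₂, if c then F g₂ b₂ else 0)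
        = if c then ∑ g₂ : G₂, ∑ b₂ : B₂, F g₂ b₂ else 0 := by
    intro c _ F; split <;> simp
  simp only [ite_mul, one_mul, zero_mul, mul_ite, mul_zero]
  rw [Finset.sum_congr rfl fun y _ => Finset.sum_congr rfl fun a' _ => pull _ _]
  simp only [Finset.sum_ite_eq', Finset.mem_univ, if_true]
  simp only [Finset.sum_comm (γ := Y) (α := B₂), Finset.sum_comm (γ := G₂) (α := B₂)]
  refine Finset.sum_eq_zero fun b₂ _ => ?_
  simp only [← Finset.sum_mul]
  exact center_zero (fun y => ∑ g₂ : G₂, p (y, a, g₁, g₂, b₂))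
    (pG1 p g₁ * pB2 p b₂ / pAG1B2 p a g₁ b₂) (pAG1B2 p a g₁ b₂) (m1 p a g₁ b₂)
    rfl (ne_of_gt (pAG1B2_pos' p hpos a g₁ b₂)) rfl

lemma keyF2 [Nonempty Y] [Nonempty A] [Nonempty G₁] [Nonempty G₂]
    (hpos : ∀ o, 0 < p o) (a : A) (g₁ : G₁) :
    ∑ y : Y, ∑ a' : A, ∑ g₂ : G₂, ∑ b₂ : B₂,
      p (y, a', g₁, g₂, b₂) *
        ((if a' = a then (1 : ℝ) else 0) *
          (pG1 p g₁ * pG2B2 p g₂ b₂ / pAG1G2B2 p a g₁ g₂ b₂) *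
          ((y : ℝ) - m2 p a g₁ g₂ b₂)) = 0 := by
  have pull : ∀ (c : Prop) [Decidable c] (F : G₂ → B₂ → ℝ),
      (∑ g₂ : G₂, ∑ b₂ : B₂, if c then F g₂ b₂ else 0)
        = if c then ∑ g₂ : G₂, ∑ b₂ : B₂, F g₂ b₂ else 0 := by
    intro c _ F; split <;> simp
  simp only [ite_mul, one_mul, zero_mul, mul_ite, mul_zero]
  rw [Finset.sum_congr rfl fun y _ => Finset.sum_congr rfl fun a' _ => pull _ _]
  simp only [Finset.sum_ite_eq', Finset.mem_univ, if_true]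
  simp only [Finset.sum_comm (γ := Y) (α := B₂), Finset.sum_comm (γ := Y) (α := G₂)]
  refine Finset.sum_eq_zero fun g₂ _ => Finset.sum_eq_zero fun b₂ _ => ?_
  exact center_zero (fun y => p (y, a, g₁, g₂, b₂))
    (pG1 p g₁ * pG2B2 p g₂ b₂ / pAG1G2B2 p a g₁ g₂ b₂) (pAG1G2B2 p a g₁ g₂ b₂)
    (m2 p a g₁ g₂ b₂) rfl (ne_of_gt (pAG1G2B2_pos' p hpos a g₁ g₂ b₂)) rfl

lemma keyF3 [Nonempty Y] [Nonempty A] [Nonempty G₁] [Nonempty G₂]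
    (hpos : ∀ o, 0 < p o) (hCI : CI_G2_AG1_B2 p) (a : A) (g₁ : G₁) :
    ∑ y : Y, ∑ a' : A, ∑ g₂ : G₂, ∑ b₂ : B₂,
      p (y, a', g₁, g₂, b₂) * (∑ g₁' : G₁, pG1 p g₁' * m1 p a g₁' b₂) =
    ∑ y : Y, ∑ a' : A, ∑ g₂ : G₂, ∑ b₂ : B₂,
      p (y, a', g₁, g₂, b₂) * (∑ g₁' : G₁, pG1 p g₁' * m2 p a g₁' g₂ b₂) := by
  simp only [Finset.mul_sum]
  simp only [Finset.sum_comm (γ := Y) (α := B₂), Finset.sum_comm (γ := A) (α := B₂),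
    Finset.sum_comm (γ := G₂) (α := B₂), Finset.sum_comm (γ := Y) (α := G₁),
    Finset.sum_comm (γ := A) (α := G₁), Finset.sum_comm (γ := G₂) (α := G₁),
    Finset.sum_comm (γ := Y) (α := G₂), Finset.sum_comm (γ := A) (α := G₂)]
  refine Finset.sum_congr rfl fun b₂ _ => Finset.sum_congr rfl fun g₁' _ => ?_
  simp only [← Finset.sum_mul]
  have h := key_ii p hpos hCI a g₁ g₁' b₂
  rw [show (pG1 p g₁' * m1 p a g₁' b₂) = m1 p a g₁' b₂ * pG1 p g₁' from mul_comm _ _,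
    ← mul_assoc, ← h, Finset.sum_mul]
  exact Finset.sum_congr rfl fun g₂ _ => by ring

end Aux

/-- Second orthogonality condition in the proof of Lemma 4.1: given
`G₂ ⊥ (A, G₁) | B₂`, the difference of the two influence functions has
vanishing conditional expectation given `G₁`. -/
theorem psi_difference_condExp_G1
    (p : Y × A × G₁ × G₂ × B₂ → ℝ)
    (hpos : ∀ o, 0 < p o) (hsum : ∑ o, p o = 1) (a : A)
    (hCI : CI_G2_AG1_B2 p) :
    ∀ g₁ : G₁,
      ∑ y : Y, ∑ a' : A, ∑ g₂ : G₂, ∑ b₂ : B₂,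
        (p (y, a', g₁, g₂, b₂) / pG1 p g₁) *
          (psi1 p a y a' g₁ b₂ - psi2 p a y a' g₁ g₂ b₂) = 0 := by
  have hne : Nonempty (Y × A × G₁ × G₂ × B₂) := by
    by_contra h
    rw [not_nonempty_iff] at h
    rw [Finset.univ_eq_empty, Finset.sum_empty] at hsum
    exact one_ne_zero hsum.symm
  obtain ⟨⟨y0, a0, g10, g20, b20⟩⟩ := hne
  haveI : Nonempty Y := ⟨y0⟩
  haveI : Nonempty A := ⟨a0⟩
  haveI : Nonempty G₁ := ⟨g10⟩
  haveI : Nonempty G₂ := ⟨g20⟩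
  haveI : Nonempty B₂ := ⟨b20⟩
  intro g₁
  have hrw : ∀ (y : Y) (a' : A) (g₂ : G₂) (b₂ : B₂),
      p (y, a', g₁, g₂, b₂) * (psi1 p a y a' g₁ b₂ - psi2 p a y a' g₁ g₂ b₂)
        = p (y, a', g₁, g₂, b₂) *
            ((if a' = a then (1 : ℝ) else 0) *
              (pG1 p g₁ * pB2 p b₂ / pAG1B2 p a g₁ b₂) * ((y : ℝ) - m1 p a g₁ b₂))
          - p (y, a', g₁, g₂, b₂) *
            ((if a' = a then (1 : ℝ) else 0) *
              (pG1 p g₁ * pG2B2 p g₂ b₂ / pAG1G2B2 p a g₁ g₂ b₂) *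
              ((y : ℝ) - m2 p a g₁ g₂ b₂))
          + (p (y, a', g₁, g₂, b₂) * (∑ g₁' : G₁, pG1 p g₁' * m1 p a g₁' b₂)
             - p (y, a', g₁, g₂, b₂) * (∑ g₁' : G₁, pG1 p g₁' * m2 p a g₁' g₂ b₂)) := by
    intro y a' g₂ b₂
    simp only [psi1, psi2]
    rw [key_u p hpos hCI a g₁, key_T p hpos hCI a]
    ring
  simp only [div_mul_eq_mul_div, ← Finset.sum_div]
  rw [div_eq_zero_iff]
  left
  rw [Finset.sum_congr rfl fun y _ => Finset.sum_congr rfl fun a' _ =>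
    Finset.sum_congr rfl fun g₂ _ => Finset.sum_congr rfl fun b₂ _ => hrw y a' g₂ b₂]
  simp only [Finset.sum_add_distrib, Finset.sum_sub_distrib]
  rw [keyF1 p hpos a g₁, keyF2 p hpos a g₁, keyF3 p hpos hCI a g₁]
  ring

end
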